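/- arXiv:2102.10217 — 3 statements merged into one kernel-verified Lean document; each statement's English description precedes it below -/
import Mathlib

section
/- Lemma 3.3, part 2, column-wise implications (deterministic). Let U and U* be n×r real matrices with orthonormal columns; let B̃ be an r×q real matrix of rank r with columns b̃_k, set x*_k := U*b̃_k, σ⁺ := σ₁(B̃), σ⁻ := σ_r(B̃), κ := σ⁺/σ⁻. Suppose δ satisfies ‖(I − UUᵀ)U*‖_F ≤ δ ≤ 0.1/κ, and suppose the vectors b̂_k ∈ ℝ^r satisfy ‖Uᵀx*_k − b̂_k‖ ≤ 0.4·‖(I − UUᵀ)U*b̃_k‖ for every k ∈ [q]. Set x̂_k := Ub̂_k. Then for every k ∈ [q]: (a) ‖x̂_k − x*_k‖ ≤ 1.4·‖(I − UUᵀ)U*b̃_k‖; (b) ‖Uᵀx*_k − b̂_k‖ ≤ 0.4·δ·‖b̃_k‖ and ‖x̂_k − x*_k‖ ≤ 1.4·δ·‖x*_k‖; (c) ‖U*ᵀUb̂_k − b̃_k‖ ≤ 2.5·δ·‖b̃_k‖; (d) ‖b̂_k‖ ≤ 1.04·‖b̃_k‖; in particular, if additionally max_k ‖b̃_k‖ ≤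 μσ⁺√(r/q) for some μ ≥ 1 (Assumption 1), then ‖b̂_k‖ ≤ 1.1·μσ⁺√(r/q) for all k. -/
open MeasureTheory ProbabilityTheory Matrix
open scoped ENNReal

noncomputable section

/-- Euclidean norm of a finitely-indexed real vector. -/
def vnorm {ι : Type*} [Fintype ι] (v : ι → ℝ) : ℝ := Real.sqrt (∑ i, v i ^ 2)

/-- Frobenius norm of a real matrix. -/
def frob {ι ι' : Type*} [Fintype ι] [Fintype ι'] (M : Matrix ι ι' ℝ) : ℝ :=
  Real.sqrt (∑ i, ∑ j, M i j ^ 2)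

/-- Spectral (ℓ2 operator) norm of a real matrix. -/
def spec {ι ι' : Type*} [Fintype ι] [Fintype ι'] (M : Matrix ι ι' ℝ) : ℝ :=
  sSup {c | ∃ z, vnorm z = 1 ∧ c = vnorm (M.mulVec z)}

/-- Smallest singular value of an r×q matrix with r ≤ q (or of a square matrix):
the minimum of ‖Bᵀw‖ over unit vectors w. -/
def sigMin {ι ι' : Type*} [Fintype ι] [Fintype ι'] (B : Matrix ι ι' ℝ) : ℝ :=
  sInf {c | ∃ w, vnorm w = 1 ∧ c = vnorm (Bᵀ.mulVec w)}

/-- The k-th column of a matrix. -/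
def matCol {ι ι' : Type*} (B : Matrix ι ι' ℝ) (k : ι') : ι → ℝ := fun i => B i k

/-- Subspace distance SD(U₁,U₂) := ‖(I − U₁U₁ᵀ)U₂‖_F. -/
def SD {n r : ℕ} (U₁ U₂ : Matrix (Fin n) (Fin r) ℝ) : ℝ :=
  frob ((1 - U₁ * U₁ᵀ) * U₂)

/-- The standard Gaussian measure on ℝ. -/
def stdGaussian : Measure ℝ := gaussianReal 0 1

instance : IsProbabilityMeasure stdGaussian :=
  inferInstanceAs (IsProbabilityMeasure (gaussianReal 0 1))

/-- A standard Gaussian random vector in ℝⁿ (i.i.d. N(0,1) coordinates). -/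
def gaussianVec (n : ℕ) : Measure (Fin n → ℝ) := Measure.pi fun _ => stdGaussian

instance (n : ℕ) : IsProbabilityMeasure (gaussianVec n) := by
  unfold gaussianVec; infer_instance

/-- i.i.d. standard Gaussian random vectors a_{k i} ∈ ℝⁿ, k ∈ [q], i ∈ [m]. -/
def gaussianMatrices (q m n : ℕ) : Measure (Fin q → Fin m → Fin n → ℝ) :=
  Measure.pi fun _ => Measure.pi fun _ => gaussianVec n

instance (q m n : ℕ) : IsProbabilityMeasure (gaussianMatrices q m n) := by
  unfold gaussianMatrices; infer_instance

/-- Truncated spectral-initialization matrix X̂₀ = (1/m) Σ_{k,i} a_ki y_ki 1{y_ki² ≤ α} e_kᵀ. -/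
def initMat {n q m : ℕ} (xstar : Fin q → Fin n → ℝ) (α : ℝ)
    (ω : Fin q → Fin m → Fin n → ℝ) : Matrix (Fin n) (Fin q) ℝ :=
  Matrix.of fun j k => (1 / (m : ℝ)) * ∑ i, ω k i j * (ω k i ⬝ᵥ xstar k) *
    (if (ω k i ⬝ᵥ xstar k) ^ 2 ≤ α then 1 else 0)

/-- Data-dependent truncation threshold α := C̃ Σ_{k,i} y_ki² / (mq). -/
def initAlpha {n q m : ℕ} (xstar : Fin q → Fin n → ℝ) (Ctil : ℝ)
    (ω : Fin q → Fin m → Fin n → ℝ) : ℝ :=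
  Ctil * ((∑ k, ∑ i, (ω k i ⬝ᵥ xstar k) ^ 2) / ((m : ℝ) * q))

/-- β(α) := E[ζ² 1{‖x‖² ζ² ≤ α}] for ζ standard Gaussian. -/
def betaK (normx α : ℝ) : ℝ :=
  ∫ z, z ^ 2 * (if normx ^ 2 * z ^ 2 ≤ α then 1 else 0) ∂stdGaussian

/-- The least-squares estimate b̂ := (UᵀAᵀAU)⁻¹ Uᵀ Aᵀ A x. -/
def lsEst {n r m : ℕ} (U : Matrix (Fin n) (Fin r) ℝ) (A : Matrix (Fin m) (Fin n) ℝ)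
    (x : Fin n → ℝ) : Fin r → ℝ :=
  ((Uᵀ * Aᵀ * A * U)⁻¹ * Uᵀ * Aᵀ * A).mulVec x

/-- Gradient w.r.t. U of the squared loss: Σ_k Aᵀ(AUb̂_k − Ax*_k)b̂_kᵀ. -/
def gradU {n r q m : ℕ} (U : Matrix (Fin n) (Fin r) ℝ)
    (A : Fin q → Matrix (Fin m) (Fin n) ℝ) (xstar : Fin q → Fin n → ℝ)
    (bhat : Fin q → Fin r → ℝ) : Matrix (Fin n) (Fin r) ℝ :=
  ∑ k, (A k)ᵀ * vecMulVec ((A k).mulVec (U.mulVec (bhat k) - xstar k)) (bhat k)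

/-- `U` has orthonormal columns whose span is the span of eigenvectors of `S`
corresponding to its `r` largest eigenvalues: `S` maps the column span of `U` into itself,
and wᵀSw ≥ zᵀSz for unit w in the span and unit z orthogonal to it. -/
def IsTopREigenBasis {n r : ℕ} (S : Matrix (Fin n) (Fin n) ℝ)
    (U : Matrix (Fin n) (Fin r) ℝ) : Prop :=
  Uᵀ * U = 1 ∧ (∃ M : Matrix (Fin r) (Fin r) ℝ, S * U = U * M) ∧
  ∀ w z : Fin n → ℝ, (∃ cvec : Fin r → ℝ, w = U.mulVec cvec) → Uᵀ.mulVec z = 0 →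
    vnorm w = 1 → vnorm z = 1 → z ⬝ᵥ S.mulVec z ≤ w ⬝ᵥ S.mulVec w

/-- Sample sizes for the 2T+1 sample splits: batch τ ∈ {0,…,T} has m τ rows,
batch τ = T + t (t ∈ {1,…,T}) has m t rows. -/
def msize (m : ℕ → ℕ) (T τ : ℕ) : ℕ := if τ ≤ T then m τ else m (τ - T)

/-- The joint distribution of all 2T+1 independent sample batches of i.i.d. standard
Gaussian measurement vectors. -/
def splitGauss (m : ℕ → ℕ) (T q n : ℕ) :
    Measure (∀ τ : Fin (2 * T + 1), Fin q → Fin (msize m T τ.1) → Fin n → ℝ) :=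
  Measure.pi fun τ => gaussianMatrices q (msize m T τ.1) n

instance (m : ℕ → ℕ) (T q n : ℕ) : IsProbabilityMeasure (splitGauss m T q n) := by
  unfold splitGauss; infer_instance

end

section Lemma33Aux

variable {ι ι' : Type*} [Fintype ι] [Fintype ι'] [DecidableEq ι']

private lemma vnorm_eq_norm (v : ι → ℝ) :
    vnorm v = ‖(WithLp.equiv 2 (ι → ℝ)).symm v‖ := by
  rw [EuclideanSpace.norm_eq, vnorm]
  congr 1
  refine Finset.sum_congr rfl fun i _ => ?_
  simp [Real.norm_eq_abs, sq_abs]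

private lemma vnorm_nonneg' (v : ι → ℝ) : 0 ≤ vnorm v := Real.sqrt_nonneg _

private lemma vnorm_sub_le (a b : ι → ℝ) : vnorm (a - b) ≤ vnorm a + vnorm b := by
  rw [vnorm_eq_norm, vnorm_eq_norm, vnorm_eq_norm]
  exact norm_sub_le _ _

private lemma vnorm_sub_comm (a b : ι → ℝ) : vnorm (a - b) = vnorm (b - a) := by
  rw [vnorm_eq_norm, vnorm_eq_norm]
  exact norm_sub_rev _ _

private lemma vnorm_smul (c : ℝ) (v : ι → ℝ) : vnorm (c • v) = |c| * vnorm v := by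
  rw [vnorm_eq_norm, vnorm_eq_norm]
  exact norm_smul c _

private lemma vnorm_sq (v : ι → ℝ) : vnorm v ^ 2 = v ⬝ᵥ v := by
  rw [vnorm, Real.sq_sqrt (by positivity)]
  simp [dotProduct, sq]

private lemma dot_le_vnorm (v w : ι → ℝ) : v ⬝ᵥ w ≤ vnorm v * vnorm w := by
  have h := real_inner_le_norm ((WithLp.equiv 2 (ι → ℝ)).symm v)
    ((WithLp.equiv 2 (ι → ℝ)).symm w)
  rw [vnorm_eq_norm, vnorm_eq_norm]
  refine le_trans (le_of_eq ?_) h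
  simp [dotProduct, PiLp.inner_apply, RCLike.inner_apply]
  exact Finset.sum_congr rfl fun i _ => mul_comm _ _

private lemma vnorm_mulVec_orth {U : Matrix ι ι' ℝ} (hU : Uᵀ * U = 1) (v : ι' → ℝ) :
    vnorm (U.mulVec v) = vnorm v := by
  have h : (U.mulVec v) ⬝ᵥ (U.mulVec v) = v ⬝ᵥ v := by
    rw [Matrix.dotProduct_mulVec, ← Matrix.mulVec_transpose, Matrix.mulVec_mulVec, hU,
      Matrix.one_mulVec]
  rw [vnorm, vnorm]
  congr 1
  have h2 : ∀ w : ι → ℝ, ∑ i, w i ^ 2 = w ⬝ᵥ w := fun w => by simp [dotProduct, sq]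
  have h3 : ∀ w : ι' → ℝ, ∑ i, w i ^ 2 = w ⬝ᵥ w := fun w => by simp [dotProduct, sq]
  rw [h2, h3, h]

private lemma vnorm_transpose_mulVec_le {U : Matrix ι ι' ℝ} (hU : Uᵀ * U = 1)
    (y : ι → ℝ) : vnorm (Uᵀ.mulVec y) ≤ vnorm y := by
  have hp2 : U.mulVec (Uᵀ.mulVec y) = (U * Uᵀ).mulVec y := Matrix.mulVec_mulVec _ _ _
  set p := U.mulVec (Uᵀ.mulVec y) with hp
  have h1 : vnorm (Uᵀ.mulVec y) = vnorm p := (vnorm_mulVec_orth hU _).symm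
  have hSp : (U * Uᵀ).mulVec p = p := by
    rw [hp2, Matrix.mulVec_mulVec, ← Matrix.mul_assoc,
      Matrix.mul_assoc U Uᵀ U, hU, Matrix.mul_one]
  have hpp : p ⬝ᵥ p = y ⬝ᵥ p := by
    calc p ⬝ᵥ p = ((U * Uᵀ).mulVec y) ⬝ᵥ p := by rw [← hp2]
    _ = p ⬝ᵥ ((U * Uᵀ).mulVec y) := dotProduct_comm _ _
    _ = ((U * Uᵀ)ᵀ.mulVec p) ⬝ᵥ y := by
        rw [Matrix.dotProduct_mulVec, Matrix.mulVec_transpose]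
    _ = ((U * Uᵀ).mulVec p) ⬝ᵥ y := by rw [Matrix.transpose_mul, Matrix.transpose_transpose]
    _ = p ⬝ᵥ y := by rw [hSp]
    _ = y ⬝ᵥ p := dotProduct_comm _ _
  have h2 : vnorm p ^ 2 ≤ vnorm y * vnorm p := by
    rw [vnorm_sq, hpp]; exact dot_le_vnorm _ _
  rw [h1]
  nlinarith [vnorm_nonneg' p, vnorm_nonneg' y]

private lemma vnorm_mulVec_le_frob (M : Matrix ι ι' ℝ) (v : ι' → ℝ) :
    vnorm (M.mulVec v) ≤ frob M * vnorm v := by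
  rw [vnorm, frob, vnorm, ← Real.sqrt_mul (by positivity)]
  apply Real.sqrt_le_sqrt
  rw [Finset.sum_mul]
  refine Finset.sum_le_sum fun i _ => ?_
  exact Finset.sum_mul_sq_le_sq_mul_sq Finset.univ _ _

private lemma frob_nonneg (M : Matrix ι ι' ℝ) : 0 ≤ frob M := Real.sqrt_nonneg _

private lemma le_spec (M : Matrix ι ι' ℝ) {z : ι' → ℝ} (hz : vnorm z = 1) :
    vnorm (M.mulVec z) ≤ spec M := by
  apply le_csSup
  · refine ⟨frob M, ?_⟩
    rintro c ⟨w, hw, rfl⟩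
    calc vnorm (M.mulVec w) ≤ frob M * vnorm w := vnorm_mulVec_le_frob M w
    _ = frob M := by rw [hw, mul_one]
  · exact ⟨z, hz, rfl⟩

private lemma spec_nonneg (M : Matrix ι ι' ℝ) {z : ι' → ℝ} (hz : vnorm z = 1) :
    0 ≤ spec M :=
  le_trans (vnorm_nonneg' _) (le_spec M hz)

private lemma sigMin_nonneg (M : Matrix ι ι' ℝ) : 0 ≤ sigMin M :=
  Real.sInf_nonneg (by rintro c ⟨w, hw, rfl⟩; exact vnorm_nonneg' _)

private lemma transpose_mulVec_le_spec (M : Matrix ι ι' ℝ) {w : ι → ℝ}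
    (hw : vnorm w = 1) (hs : 0 ≤ spec M) :
    vnorm (Mᵀ.mulVec w) ≤ spec M := by
  set u := Mᵀ.mulVec w with hu
  set t := vnorm u with ht
  rcases eq_or_lt_of_le (vnorm_nonneg' u) with h0 | h0
  · rw [ht, ← h0]; exact hs
  · set z := t⁻¹ • u with hz
    have hzn : vnorm z = 1 := by
      rw [hz, vnorm_smul, abs_of_pos (inv_pos.mpr h0), ← ht, inv_mul_cancel₀ (ne_of_gt h0)]
    have key : t ^ 2 = t * (w ⬝ᵥ M.mulVec z) := by
      have : w ⬝ᵥ M.mulVec u = u ⬝ᵥ u := by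
        rw [Matrix.dotProduct_mulVec, ← Matrix.mulVec_transpose, ← hu]
      have hu' : u = t • z := by
        rw [hz, smul_smul, mul_inv_cancel₀ (ne_of_gt h0), one_smul]
      calc t ^ 2 = u ⬝ᵥ u := by rw [ht, vnorm_sq]
      _ = w ⬝ᵥ M.mulVec u := this.symm
      _ = w ⬝ᵥ M.mulVec (t • z) := by rw [← hu']
      _ = t * (w ⬝ᵥ M.mulVec z) := by rw [Matrix.mulVec_smul, dotProduct_smul, smul_eq_mul]
    have hcs : w ⬝ᵥ M.mulVec z ≤ vnorm (M.mulVec z) := by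
      calc w ⬝ᵥ M.mulVec z ≤ vnorm w * vnorm (M.mulVec z) := dot_le_vnorm _ _
      _ = vnorm (M.mulVec z) := by rw [hw, one_mul]
    have hspec := le_spec M hzn
    have h0' : 0 < t := ht ▸ h0
    have : t ^ 2 ≤ t * spec M := by
      rw [key]
      exact mul_le_mul_of_nonneg_left (le_trans hcs hspec) (le_of_lt h0')
    nlinarith

end Lemma33Aux

/-- **Lemma 3.3, part 2, column-wise implications** (deterministic). -/
theorem lemma33_part2_columns (n r q : ℕ) (U Ustar : Matrix (Fin n) (Fin r) ℝ)
    (Btil : Matrix (Fin r) (Fin q) ℝ) (bhat : Fin q → Fin r → ℝ) (δ : ℝ)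
    (hU : Uᵀ * U = 1) (hUs : Ustarᵀ * Ustar = 1) (hrank : Btil.rank = r)
    (hδ1 : frob ((1 - U * Uᵀ) * Ustar) ≤ δ)
    (hδ2 : δ ≤ 0.1 / (spec Btil / sigMin Btil))
    (hb : ∀ k, vnorm (Uᵀ.mulVec (Ustar.mulVec (matCol Btil k)) - bhat k) ≤
      0.4 * vnorm ((1 - U * Uᵀ).mulVec (Ustar.mulVec (matCol Btil k)))) :
    ∀ k : Fin q,
      vnorm (U.mulVec (bhat k) - Ustar.mulVec (matCol Btil k)) ≤
        1.4 * vnorm ((1 - U * Uᵀ).mulVec (Ustar.mulVec (matCol Btil k))) ∧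
      vnorm (Uᵀ.mulVec (Ustar.mulVec (matCol Btil k)) - bhat k) ≤
        0.4 * δ * vnorm (matCol Btil k) ∧
      vnorm (U.mulVec (bhat k) - Ustar.mulVec (matCol Btil k)) ≤
        1.4 * δ * vnorm (Ustar.mulVec (matCol Btil k)) ∧
      vnorm (Ustarᵀ.mulVec (U.mulVec (bhat k)) - matCol Btil k) ≤
        2.5 * δ * vnorm (matCol Btil k) ∧
      vnorm (bhat k) ≤ 1.04 * vnorm (matCol Btil k) ∧
      (∀ μ : ℝ, 1 ≤ μ →
        (∀ j, vnorm (matCol Btil j) ≤ μ * spec Btil * Real.sqrt ((r : ℝ) / q)) →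
        vnorm (bhat k) ≤ 1.1 * μ * spec Btil * Real.sqrt ((r : ℝ) / q)) := by
  intro k
  have hbk := hb k
  have hδ0 : 0 ≤ δ := le_trans (frob_nonneg _) hδ1
  have hP0 : 0 ≤ vnorm ((1 - U * Uᵀ).mulVec (Ustar.mulVec (matCol Btil k))) :=
    vnorm_nonneg' _
  have hb0 : 0 ≤ vnorm (matCol Btil k) := vnorm_nonneg' _
  -- P ≤ δ * ‖b‖
  have hF2 : vnorm ((1 - U * Uᵀ).mulVec (Ustar.mulVec (matCol Btil k))) ≤
      δ * vnorm (matCol Btil k) := by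
    rw [Matrix.mulVec_mulVec]
    exact le_trans (vnorm_mulVec_le_frob _ _) (mul_le_mul_of_nonneg_right hδ1 hb0)
  -- ‖xs‖ = ‖b‖
  have hF1 : vnorm (Ustar.mulVec (matCol Btil k)) = vnorm (matCol Btil k) :=
    vnorm_mulVec_orth hUs _
  -- δ ≤ 0.1
  have hδtop : δ ≤ 0.1 := by
    have hz1 : vnorm (Pi.single k 1 : Fin q → ℝ) = 1 := by
      rw [vnorm]
      rw [show (∑ i, (Pi.single k 1 : Fin q → ℝ) i ^ 2) = 1 by
        rw [Finset.sum_eq_single k] <;> simp +contextual [Pi.single_apply]]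
      exact Real.sqrt_one
    have hs0 : 0 ≤ spec Btil := spec_nonneg Btil hz1
    have hm0 : 0 ≤ sigMin Btil := sigMin_nonneg Btil
    rcases eq_or_lt_of_le hm0 with hm | hm
    · rw [← hm, div_zero, div_zero] at hδ2
      linarith
    · have hne : {c | ∃ w, vnorm w = 1 ∧ c = vnorm (Btilᵀ.mulVec w)}.Nonempty := by
        by_contra hemp
        rw [Set.not_nonempty_iff_eq_empty] at hemp
        rw [sigMin, hemp, Real.sInf_empty] at hm
        exact lt_irrefl 0 hm
      obtain ⟨c, w, hw, rfl⟩ := hne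
      have h1 : sigMin Btil ≤ vnorm (Btilᵀ.mulVec w) :=
        csInf_le ⟨0, by rintro c ⟨w', hw', rfl⟩; exact vnorm_nonneg' _⟩ ⟨w, hw, rfl⟩
      have h2 : vnorm (Btilᵀ.mulVec w) ≤ spec Btil :=
        transpose_mulVec_le_spec Btil hw hs0
      have hκ : 1 ≤ spec Btil / sigMin Btil :=
        (one_le_div hm).mpr (le_trans h1 h2)
      calc δ ≤ 0.1 / (spec Btil / sigMin Btil) := hδ2
      _ ≤ 0.1 := by
        rw [div_le_iff₀ (lt_of_lt_of_le one_pos hκ)]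
        nlinarith
  -- (a)
  have ha : vnorm (U.mulVec (bhat k) - Ustar.mulVec (matCol Btil k)) ≤
      1.4 * vnorm ((1 - U * Uᵀ).mulVec (Ustar.mulVec (matCol Btil k))) := by
    have hid : U.mulVec (bhat k) - Ustar.mulVec (matCol Btil k) =
        U.mulVec (bhat k - Uᵀ.mulVec (Ustar.mulVec (matCol Btil k))) -
          (1 - U * Uᵀ).mulVec (Ustar.mulVec (matCol Btil k)) := by
      rw [Matrix.mulVec_sub, Matrix.sub_mulVec, Matrix.one_mulVec, Matrix.mulVec_mulVec]
      abel
    rw [hid]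
    have h1 : vnorm (U.mulVec (bhat k - Uᵀ.mulVec (Ustar.mulVec (matCol Btil k)))) =
        vnorm (Uᵀ.mulVec (Ustar.mulVec (matCol Btil k)) - bhat k) := by
      rw [vnorm_mulVec_orth hU, vnorm_sub_comm]
    have h2 := vnorm_sub_le (U.mulVec (bhat k - Uᵀ.mulVec (Ustar.mulVec (matCol Btil k))))
      ((1 - U * Uᵀ).mulVec (Ustar.mulVec (matCol Btil k)))
    rw [h1] at h2
    linarith
  -- (b1)
  have hb1 : vnorm (Uᵀ.mulVec (Ustar.mulVec (matCol Btil k)) - bhat k) ≤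
      0.4 * δ * vnorm (matCol Btil k) := by nlinarith
  -- (b2)
  have hb2 : vnorm (U.mulVec (bhat k) - Ustar.mulVec (matCol Btil k)) ≤
      1.4 * δ * vnorm (Ustar.mulVec (matCol Btil k)) := by
    rw [hF1]; nlinarith
  -- (c)
  have hc : vnorm (Ustarᵀ.mulVec (U.mulVec (bhat k)) - matCol Btil k) ≤
      2.5 * δ * vnorm (matCol Btil k) := by
    have hid : Ustarᵀ.mulVec (U.mulVec (bhat k)) - matCol Btil k =
        Ustarᵀ.mulVec (U.mulVec (bhat k) - Ustar.mulVec (matCol Btil k)) := by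
      rw [Matrix.mulVec_sub, Matrix.mulVec_mulVec (matCol Btil k) Ustarᵀ Ustar, hUs,
        Matrix.one_mulVec]
    rw [hid]
    have h1 : vnorm (Ustarᵀ.mulVec (U.mulVec (bhat k) - Ustar.mulVec (matCol Btil k))) ≤
        vnorm (U.mulVec (bhat k) - Ustar.mulVec (matCol Btil k)) :=
      vnorm_transpose_mulVec_le hUs _
    nlinarith
  -- (d)
  have hd : vnorm (bhat k) ≤ 1.04 * vnorm (matCol Btil k) := by
    have h1 : vnorm (bhat k) ≤ vnorm (Uᵀ.mulVec (Ustar.mulVec (matCol Btil k))) +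
        vnorm (Uᵀ.mulVec (Ustar.mulVec (matCol Btil k)) - bhat k) := by
      have := vnorm_sub_le (Uᵀ.mulVec (Ustar.mulVec (matCol Btil k)))
        (Uᵀ.mulVec (Ustar.mulVec (matCol Btil k)) - bhat k)
      rw [show Uᵀ.mulVec (Ustar.mulVec (matCol Btil k)) -
        (Uᵀ.mulVec (Ustar.mulVec (matCol Btil k)) - bhat k) = bhat k by abel] at this
      exact this
    have h2 : vnorm (Uᵀ.mulVec (Ustar.mulVec (matCol Btil k))) ≤
        vnorm (matCol Btil k) := by
      rw [← hF1]; exact vnorm_transpose_mulVec_le hU _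
    nlinarith
  refine ⟨ha, hb1, hb2, hc, hd, ?_⟩
  intro μ hμ hcol
  have hX := hcol k
  have hX0 : 0 ≤ μ * spec Btil * Real.sqrt ((r : ℝ) / q) := le_trans hb0 hX
  calc vnorm (bhat k) ≤ 1.04 * vnorm (matCol Btil k) := hd
  _ ≤ 1.04 * (μ * spec Btil * Real.sqrt ((r : ℝ) / q)) := by linarith
  _ ≤ 1.1 * μ * spec Btil * Real.sqrt ((r : ℝ) / q) := by nlinarith
end

section
/- Lemma 3.6, part 1 (expectation of the truncated initialization matrix). Let x*_1,…,x*_q ∈ ℝⁿ, let X* be the n×q matrix with these columns, and let α ≥ 0 be a fixed (deterministic) threshold. Let a_ki (k ∈ [q], i ∈ [m]) be i.i.d. standard Gaussian random vectors in ℝⁿ, y_ki := ⟨a_ki, x*_k⟩, and X̂₀ := (1/m)·Σ_{k,i} a_ki·y_ki·1{y_ki² ≤ α}·e_kᵀ (an n×q random matrix, e_k the k-th standard basis vector of ℝ^q). Then E[X̂₀] = X*·D(α), where D(α) is the q×q diagonal matrix with k-th diagonal entry β_k(α) := E[ζ²·1{‖x*_k‖²·ζ² ≤ α}] for ζ a standard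 Gaussian scalar random variable. -/
open MeasureTheory ProbabilityTheory Matrix
open scoped ENNReal

noncomputable section

namespace Lem36

theorem lintegral_pi_prod : ∀ (n : ℕ) (f : Fin n → ℝ → ℝ≥0∞), (∀ i, Measurable (f i)) →
    ∫⁻ a : Fin n → ℝ, ∏ i, f i (a i) ∂Measure.pi (fun _ => (volume : Measure ℝ)) =
      ∏ i, ∫⁻ x, f i x ∂(volume : Measure ℝ) := by
  intro n
  induction n with
  | zero =>
    intro f hf
    rw [Measure.pi_of_empty (fun _ : Fin 0 => (volume : Measure ℝ))]
    simp
  | succ n ih =>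
    intro f hf
    have h := measurePreserving_piFinSuccAbove (fun _ : Fin (n + 1) => (volume : Measure ℝ)) 0
    have hg : ∀ a : Fin (n + 1) → ℝ,
        (fun p : ℝ × (Fin n → ℝ) => f 0 p.1 * ∏ i, f i.succ (p.2 i))
          ((MeasurableEquiv.piFinSuccAbove (fun _ => ℝ) 0) a) = ∏ i, f i (a i) := by
      intro a
      rw [Fin.prod_univ_succ]
      simp [MeasurableEquiv.piFinSuccAbove, Fin.succAbove_zero, Fin.tail]
    calc ∫⁻ a : Fin (n + 1) → ℝ, ∏ i, f i (a i) ∂Measure.pi (fun _ => (volume : Measure ℝ))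
        = ∫⁻ a, (fun p : ℝ × (Fin n → ℝ) => f 0 p.1 * ∏ i, f i.succ (p.2 i))
            ((MeasurableEquiv.piFinSuccAbove (fun _ => ℝ) 0) a)
            ∂Measure.pi (fun _ => (volume : Measure ℝ)) := by
          refine lintegral_congr fun a => (hg a).symm
      _ = ∫⁻ p : ℝ × (Fin n → ℝ), f 0 p.1 * ∏ i, f i.succ (p.2 i)
            ∂((volume : Measure ℝ).prod (Measure.pi fun _ => (volume : Measure ℝ))) := by
          exact h.lintegral_comp ((hf 0).comp measurable_fst |>.mul
            (Finset.measurable_prod _ fun (i : Fin n) _ => (hf i.succ).comp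
              ((measurable_pi_apply i).comp measurable_snd)))
      _ = (∫⁻ x, f 0 x ∂(volume : Measure ℝ)) *
            ∫⁻ b : Fin n → ℝ, ∏ i : Fin n, f i.succ (b i) ∂Measure.pi (fun _ => (volume : Measure ℝ)) :=
          lintegral_prod_mul (f := f 0) (g := fun b : Fin n → ℝ => ∏ i : Fin n, f i.succ (b i))
            (hf 0).aemeasurable
            (Finset.measurable_prod _ fun i _ => (hf i.succ).comp (measurable_pi_apply i)).aemeasurable
      _ = (∫⁻ x, f 0 x ∂(volume : Measure ℝ)) * ∏ i : Fin n, ∫⁻ x, f i.succ x ∂(volume : Measure ℝ) := by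
          rw [ih (fun i => f i.succ) (fun i => hf i.succ)]
      _ = ∏ i : Fin (n + 1), ∫⁻ x, f i x ∂(volume : Measure ℝ) :=
          (Fin.prod_univ_succ (fun i : Fin (n + 1) => ∫⁻ x, f i x ∂(volume : Measure ℝ))).symm

def gpdf : ℝ → ℝ≥0∞ := gaussianPDF 0 1

lemma measurable_gpdf : Measurable gpdf := measurable_gaussianPDF 0 1

lemma stdGaussian_eq : _root_.stdGaussian = (volume : Measure ℝ).withDensity gpdf :=
  gaussianReal_of_var_ne_zero 0 one_ne_zero

lemma measurable_D (n : ℕ) : Measurable fun a : Fin n → ℝ => ∏ i, gpdf (a i) :=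
  Finset.measurable_prod _ fun i _ => measurable_gpdf.comp (measurable_pi_apply i)

lemma gaussianVec_eq (n : ℕ) :
    gaussianVec n = (volume : Measure (Fin n → ℝ)).withDensity (fun a => ∏ i, gpdf (a i)) := by
  unfold gaussianVec
  refine Measure.pi_eq fun s hs => ?_
  rw [withDensity_apply _ (MeasurableSet.univ_pi hs)]
  have hvol : (volume : Measure (Fin n → ℝ)) = Measure.pi fun _ => (volume : Measure ℝ) := volume_pi
  have hind : ∀ a : Fin n → ℝ,
      (Set.univ.pi s).indicator (fun a => ∏ i, gpdf (a i)) a = ∏ i, (s i).indicator gpdf (a i) := by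
    intro a
    by_cases ha : a ∈ Set.univ.pi s
    · rw [Set.indicator_of_mem ha]
      exact Finset.prod_congr rfl fun i _ =>
        (Set.indicator_of_mem (ha i (Set.mem_univ i)) _).symm
    · rw [Set.indicator_of_notMem ha]
      obtain ⟨i, hi⟩ : ∃ i, a i ∉ s i := by simpa [Set.mem_pi] using ha
      exact (Finset.prod_eq_zero (Finset.mem_univ i)
        (Set.indicator_of_notMem hi _)).symm
  rw [← lintegral_indicator (MeasurableSet.univ_pi hs), hvol]
  rw [lintegral_congr hind]
  rw [lintegral_pi_prod n _ (fun i => measurable_gpdf.indicator (hs i))]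
  refine Finset.prod_congr rfl fun i _ => ?_
  rw [lintegral_indicator (hs i), stdGaussian_eq, withDensity_apply _ (hs i)]

lemma map_eval_pi {ι : Type*} [Fintype ι] [DecidableEq ι] {α : ι → Type*}
    [∀ i, MeasurableSpace (α i)] (μ : ∀ i, Measure (α i)) [∀ i, IsProbabilityMeasure (μ i)]
    (i : ι) : (Measure.pi μ).map (fun ω => ω i) = μ i := by
  ext s hs
  rw [Measure.map_apply (measurable_pi_apply i) hs]
  have hpre : (fun ω : ∀ j, α j => ω i) ⁻¹' s
      = Set.univ.pi (Function.update (fun j => (Set.univ : Set (α j))) i s) := Set.eval_preimage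
  rw [hpre, Measure.pi_pi]
  rw [Fintype.prod_eq_single i (fun j hj => by rw [Function.update_of_ne hj]; exact measure_univ)]
  rw [Function.update_self]

lemma integral_eval_pi {ι : Type*} [Fintype ι] [DecidableEq ι] {α : ι → Type*}
    [∀ i, MeasurableSpace (α i)] (μ : ∀ i, Measure (α i)) [∀ i, IsProbabilityMeasure (μ i)]
    (i : ι) (f : α i → ℝ) (hf : Measurable f) :
    ∫ ω, f (ω i) ∂Measure.pi μ = ∫ x, f x ∂μ i := by
  have h := integral_map (μ := Measure.pi μ) (φ := fun ω => ω i)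
    (measurable_pi_apply i).aemeasurable (f := f)
    (by rw [map_eval_pi]; exact hf.aestronglyMeasurable)
  rw [map_eval_pi] at h
  exact h.symm

lemma integrable_eval_pi {ι : Type*} [Fintype ι] [DecidableEq ι] {α : ι → Type*}
    [∀ i, MeasurableSpace (α i)] (μ : ∀ i, Measure (α i)) [∀ i, IsProbabilityMeasure (μ i)]
    (i : ι) {f : α i → ℝ} (hf : Measurable f) (hint : Integrable f (μ i)) :
    Integrable (fun ω => f (ω i)) (Measure.pi μ) := by
  have : Integrable f ((Measure.pi μ).map (fun ω => ω i)) := by rwa [map_eval_pi]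
  exact (integrable_map_measure hf.aestronglyMeasurable
    (measurable_pi_apply i).aemeasurable).mp this


variable {n : ℕ}

def reflL (w : Fin n → ℝ) : (Fin n → ℝ) →ₗ[ℝ] (Fin n → ℝ) where
  toFun a := a - (2 * (a ⬝ᵥ w) / (w ⬝ᵥ w)) • w
  map_add' a b := by
    rw [add_dotProduct]
    rw [show 2 * (a ⬝ᵥ w + b ⬝ᵥ w) / (w ⬝ᵥ w)
        = 2 * (a ⬝ᵥ w) / (w ⬝ᵥ w) + 2 * (b ⬝ᵥ w) / (w ⬝ᵥ w) by ring]
    rw [add_smul]; abel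
  map_smul' c a := by
    rw [smul_dotProduct, smul_eq_mul, RingHom.id_apply]
    rw [show 2 * (c * (a ⬝ᵥ w)) / (w ⬝ᵥ w) = c * (2 * (a ⬝ᵥ w) / (w ⬝ᵥ w)) by ring]
    rw [smul_sub, mul_smul]

lemma reflL_apply (w a : Fin n → ℝ) :
    reflL w a = a - (2 * (a ⬝ᵥ w) / (w ⬝ᵥ w)) • w := rfl

lemma reflL_dot (w a b : Fin n → ℝ) :
    reflL w a ⬝ᵥ b = a ⬝ᵥ b - 2 * (a ⬝ᵥ w) / (w ⬝ᵥ w) * (w ⬝ᵥ b) := by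
  rw [reflL_apply, sub_dotProduct, smul_dotProduct, smul_eq_mul]

lemma dot_reflL (w a b : Fin n → ℝ) :
    a ⬝ᵥ reflL w b = a ⬝ᵥ b - 2 * (b ⬝ᵥ w) / (w ⬝ᵥ w) * (a ⬝ᵥ w) := by
  rw [reflL_apply, dotProduct_sub, dotProduct_smul, smul_eq_mul]

lemma dotProduct_self_nonneg (v : Fin n → ℝ) : 0 ≤ v ⬝ᵥ v :=
  Finset.sum_nonneg fun i _ => mul_self_nonneg (v i)

lemma reflL_invol (w : Fin n → ℝ) : Function.Involutive (reflL w) := by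
  intro a
  rcases eq_or_ne w 0 with rfl | hw
  · simp [reflL_apply]
  · have hW : w ⬝ᵥ w ≠ 0 := fun h => hw (dotProduct_self_eq_zero.mp h)
    rw [reflL_apply (a := reflL w a), reflL_dot]
    rw [show 2 * (a ⬝ᵥ w - 2 * (a ⬝ᵥ w) / (w ⬝ᵥ w) * (w ⬝ᵥ w)) / (w ⬝ᵥ w)
        = -(2 * (a ⬝ᵥ w) / (w ⬝ᵥ w)) by field_simp; ring]
    rw [reflL_apply, neg_smul, sub_neg_eq_add, sub_add_cancel]

lemma reflL_dot_reflL (w a b : Fin n → ℝ) : reflL w a ⬝ᵥ reflL w b = a ⬝ᵥ b := by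
  rcases eq_or_ne w 0 with rfl | hw
  · simp [reflL_apply]
  · have hW : w ⬝ᵥ w ≠ 0 := fun h => hw (dotProduct_self_eq_zero.mp h)
    rw [reflL_dot, dot_reflL w a b, dot_reflL w w b, dotProduct_comm w b]
    field_simp
    ring

def reflME (w : Fin n → ℝ) : (Fin n → ℝ) ≃ᵐ (Fin n → ℝ) where
  toFun := reflL w
  invFun := reflL w
  left_inv := reflL_invol w
  right_inv := reflL_invol w
  measurable_toFun := (reflL w).continuous_of_finiteDimensional.measurable
  measurable_invFun := (reflL w).continuous_of_finiteDimensional.measurable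

lemma measurable_reflL (w : Fin n → ℝ) : Measurable (reflL w) :=
  (reflL w).continuous_of_finiteDimensional.measurable

lemma abs_det_reflL (w : Fin n → ℝ) : |LinearMap.det (reflL w)| = 1 := by
  have key : (LinearMap.toMatrix' (reflL w))ᵀ * LinearMap.toMatrix' (reflL w) = 1 := by
    ext i j
    have h := reflL_dot_reflL w (fun k => if k = i then 1 else 0) (fun k => if k = j then 1 else 0)
    have hd : ((fun k => if k = i then (1:ℝ) else 0) ⬝ᵥ fun k => if k = j then 1 else 0)
        = if i = j then 1 else 0 := by
      by_cases hij : i = j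
      · subst hij
        simp [dotProduct]
      · simp [dotProduct, ite_and, Finset.sum_ite_eq', hij, Ne.symm hij]
    rw [Matrix.mul_apply]
    simp only [Matrix.transpose_apply, LinearMap.toMatrix'_apply, Matrix.one_apply]
    rw [show (Pi.single i (1:ℝ) : Fin n → ℝ) = fun k' => if k' = i then 1 else 0
        from funext fun k' => Pi.single_apply i 1 k',
      show (Pi.single j (1:ℝ) : Fin n → ℝ) = fun k' => if k' = j then 1 else 0
        from funext fun k' => Pi.single_apply j 1 k']
    rw [show ∑ k, reflL w (fun k' => if k' = i then (1:ℝ) else 0) k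
          * reflL w (fun k' => if k' = j then 1 else 0) k
        = reflL w (fun k => if k = i then (1:ℝ) else 0) ⬝ᵥ reflL w (fun k => if k = j then 1 else 0)
        from rfl]
    rw [h, hd]
  have hdet : LinearMap.det (reflL w) * LinearMap.det (reflL w) = 1 := by
    have h2 := congrArg Matrix.det key
    rwa [Matrix.det_mul, Matrix.det_transpose, Matrix.det_one, LinearMap.det_toMatrix'] at h2
  rcases mul_self_eq_one_iff.mp hdet with h | h <;> rw [h] <;> norm_num

lemma map_reflL_volume (w : Fin n → ℝ) :
    Measure.map (reflL w) (volume : Measure (Fin n → ℝ)) = volume := by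
  have hne : LinearMap.det (reflL w) ≠ 0 := by
    intro h
    have := abs_det_reflL w
    rw [h] at this; norm_num at this
  rw [Real.map_linearMap_volume_pi_eq_smul_volume_pi hne]
  rw [abs_inv, abs_det_reflL]
  norm_num

lemma map_withDensity_invol {f : (Fin n → ℝ) → (Fin n → ℝ)} (hf : Measurable f)
    (hinv : Function.Involutive f) {D : (Fin n → ℝ) → ℝ≥0∞} (hD : Measurable D)
    (μ : Measure (Fin n → ℝ)) :
    Measure.map f (μ.withDensity D) = (Measure.map f μ).withDensity (fun y => D (f y)) := by
  ext s hs
  rw [Measure.map_apply hf hs, withDensity_apply _ (hf hs), withDensity_apply _ hs,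
    setLIntegral_map (f := fun y => D (f y)) hs (hD.comp hf) hf]
  refine lintegral_congr fun x => ?_
  rw [hinv x]

lemma gpdf_prod_eq {a b : Fin n → ℝ} (h : a ⬝ᵥ a = b ⬝ᵥ b) :
    ∏ i, gpdf (a i) = ∏ i, gpdf (b i) := by
  have hexp : ∀ v : Fin n → ℝ,
      ∏ i, gpdf (v i) = ENNReal.ofReal ((√(2 * Real.pi))⁻¹ ^ n * Real.exp (-(v ⬝ᵥ v) / 2)) := by
    intro v
    unfold gpdf
    rw [ENNReal.ofReal_mul (by positivity), ENNReal.ofReal_pow (by positivity)]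
    have : ∀ i, gaussianPDF 0 1 (v i)
        = ENNReal.ofReal ((√(2 * Real.pi))⁻¹) * ENNReal.ofReal (Real.exp (-(v i)^2 / 2)) := by
      intro i
      rw [gaussianPDF_def]
      simp only [gaussianPDFReal_def, NNReal.coe_one, mul_one, sub_zero]
      rw [ENNReal.ofReal_mul (by positivity)]
    simp_rw [this]
    rw [Finset.prod_mul_distrib, Finset.prod_const, Finset.card_univ, Fintype.card_fin]
    congr 1
    rw [← ENNReal.ofReal_prod_of_nonneg (fun i _ => (Real.exp_pos _).le), ← Real.exp_sum]
    congr 2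
    rw [show v ⬝ᵥ v = ∑ i, (v i)^2 from Finset.sum_congr rfl fun i _ => (sq (v i)).symm]
    rw [← Finset.sum_div, Finset.sum_neg_distrib, neg_div]
  rw [hexp a, hexp b, h]

lemma measurePreserving_reflL (w : Fin n → ℝ) :
    MeasurePreserving (reflL w) (gaussianVec n) (gaussianVec n) := by
  refine ⟨measurable_reflL w, ?_⟩
  rw [gaussianVec_eq, map_withDensity_invol (measurable_reflL w) (reflL_invol w)
    (measurable_D n), map_reflL_volume]
  congr 1
  funext a
  exact gpdf_prod_eq (reflL_dot_reflL w a a)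

lemma integral_reflL (w : Fin n → ℝ) (f : (Fin n → ℝ) → ℝ) :
    ∫ a, f (reflL w a) ∂gaussianVec n = ∫ a, f a ∂gaussianVec n :=
  (measurePreserving_reflL w).integral_comp (reflME w).measurableEmbedding f


lemma integrable_id_stdGaussian : Integrable (fun z : ℝ => z) stdGaussian := by
  rw [stdGaussian_eq]
  rw [integrable_withDensity_iff measurable_gpdf (ae_of_all _ fun x => ENNReal.ofReal_lt_top)]
  have hpt : ∀ x : ℝ, (gpdf x).toReal = (√(2 * Real.pi))⁻¹ * Real.exp (-(2⁻¹) * x ^ 2) := by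
    intro x
    unfold gpdf
    rw [gaussianPDF_def]
    rw [ENNReal.toReal_ofReal (gaussianPDFReal_nonneg 0 1 x)]
    simp only [gaussianPDFReal_def, NNReal.coe_one, mul_one, sub_zero]
    congr 1
    ring
  have h : Integrable (fun x : ℝ => (√(2 * Real.pi))⁻¹ * (x * Real.exp (-(2⁻¹) * x ^ 2))) volume :=
    Integrable.const_mul (integrable_mul_exp_neg_mul_sq (by norm_num)) _
  refine h.congr (ae_of_all _ fun x => ?_)
  dsimp only
  rw [hpt x]
  ring

lemma integrable_coord (n : ℕ) (l : Fin n) :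
    Integrable (fun a : Fin n → ℝ => a l) (gaussianVec n) := by
  unfold gaussianVec
  exact integrable_eval_pi (fun _ : Fin n => stdGaussian) l measurable_id
    integrable_id_stdGaussian

lemma integrable_dotl (n : ℕ) (w : Fin n → ℝ) :
    Integrable (fun a : Fin n → ℝ => w ⬝ᵥ a) (gaussianVec n) := by
  have h : (fun a : Fin n → ℝ => w ⬝ᵥ a) = fun a => ∑ l, w l * a l := rfl
  rw [h]
  exact integrable_finset_sum _ fun l _ => (integrable_coord n l).const_mul (w l)

lemma measurable_dotr (x : Fin n → ℝ) : Measurable fun a : Fin n → ℝ => a ⬝ᵥ x :=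
  Finset.measurable_sum _ fun i _ => by fun_prop

lemma measurable_inddot (x : Fin n → ℝ) (α : ℝ) :
    Measurable fun a : Fin n → ℝ => (if (a ⬝ᵥ x) ^ 2 ≤ α then (1 : ℝ) else 0) :=
  Measurable.ite (measurableSet_le ((measurable_dotr x).pow_const 2) measurable_const)
    measurable_const measurable_const

lemma ind_bound {α : ℝ} (hα : 0 ≤ α) (y : ℝ) :
    |y * (if y ^ 2 ≤ α then (1 : ℝ) else 0)| ≤ Real.sqrt α := by
  split
  · rw [mul_one, ← Real.sqrt_sq_eq_abs]
    exact Real.sqrt_le_sqrt (by assumption)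
  · simp [Real.sqrt_nonneg]

lemma ind_bound2 {α : ℝ} (hα : 0 ≤ α) (y : ℝ) :
    |y * (y * (if y ^ 2 ≤ α then (1 : ℝ) else 0))| ≤ α := by
  split
  · rw [mul_one, show y * y = y ^ 2 by ring, abs_of_nonneg (sq_nonneg y)]
    assumption
  · simp [hα]

lemma integrable_bddmeas {f : (Fin n → ℝ) → ℝ} (hf : Measurable f) (C : ℝ)
    (hC : ∀ a, |f a| ≤ C) : Integrable f (gaussianVec n) := by
  refine Integrable.mono' (integrable_const C) hf.aestronglyMeasurable (ae_of_all _ fun a => ?_)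
  simpa [Real.norm_eq_abs] using hC a

lemma key_int (x : Fin n → ℝ) (j : Fin n) (α : ℝ) (hα : 0 ≤ α) :
    Integrable (fun a => a j * (a ⬝ᵥ x) * (if (a ⬝ᵥ x) ^ 2 ≤ α then (1 : ℝ) else 0))
      (gaussianVec n) := by
  have h := Integrable.bdd_mul (integrable_coord n j)
    ((measurable_dotr x).mul (measurable_inddot x α)).aestronglyMeasurable
    (c := Real.sqrt α) (ae_of_all _ fun a => by simpa [Real.norm_eq_abs] using ind_bound hα (a ⬝ᵥ x))
  exact h.congr (ae_of_all _ fun a => by simp only [Pi.mul_apply]; ring)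

lemma key (x : Fin n → ℝ) (j : Fin n) (α : ℝ) (hα : 0 ≤ α) :
    ∫ a, a j * (a ⬝ᵥ x) * (if (a ⬝ᵥ x) ^ 2 ≤ α then (1 : ℝ) else 0) ∂gaussianVec n
      = x j * betaK (vnorm x) α := by
  by_cases hx : x = 0
  · subst hx
    simp
  · have hS0 : 0 < x ⬝ᵥ x :=
      lt_of_le_of_ne (dotProduct_self_nonneg x) (Ne.symm fun h => hx (dotProduct_self_eq_zero.mp h))
    have hsum : ∑ i, x i ^ 2 = x ⬝ᵥ x := Finset.sum_congr rfl fun i _ => (pow_two (x i)).trans rfl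
    have hr2 : vnorm x ^ 2 = x ⬝ᵥ x := by
      unfold vnorm
      rw [Real.sq_sqrt (Finset.sum_nonneg fun i _ => sq_nonneg _), hsum]
    -- the orthogonal direction
    set w : Fin n → ℝ := Pi.single j 1 - (x j / (x ⬝ᵥ x)) • x with hwdef
    have hwa : ∀ a : Fin n → ℝ, w ⬝ᵥ a = a j - x j / (x ⬝ᵥ x) * (a ⬝ᵥ x) := by
      intro a
      rw [hwdef, sub_dotProduct, smul_dotProduct, single_dotProduct, smul_eq_mul,
        dotProduct_comm x a]
      ring
    have hwx : w ⬝ᵥ x = 0 := by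
      rw [hwdef, sub_dotProduct, smul_dotProduct, single_dotProduct, smul_eq_mul, one_mul,
        div_mul_cancel₀ _ (ne_of_gt hS0), sub_self]
    -- integrability
    have hint1 : Integrable
        (fun a => (a ⬝ᵥ x) * ((a ⬝ᵥ x) * (if (a ⬝ᵥ x) ^ 2 ≤ α then (1 : ℝ) else 0)))
        (gaussianVec n) :=
      integrable_bddmeas ((measurable_dotr x).mul ((measurable_dotr x).mul
        (measurable_inddot x α))) α (fun a => ind_bound2 hα (a ⬝ᵥ x))
    have hint2 : Integrable
        (fun a => (w ⬝ᵥ a) * ((a ⬝ᵥ x) * (if (a ⬝ᵥ x) ^ 2 ≤ α then (1 : ℝ) else 0)))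
        (gaussianVec n) := by
      have h := Integrable.bdd_mul (integrable_dotl n w)
        ((measurable_dotr x).mul (measurable_inddot x α)).aestronglyMeasurable
        (c := Real.sqrt α) (ae_of_all _ fun a => by simpa [Real.norm_eq_abs] using ind_bound hα (a ⬝ᵥ x))
      exact h.congr (ae_of_all _ fun a => by simp only [Pi.mul_apply]; ring)
    -- decomposition
    have hdecomp : (fun a : Fin n → ℝ =>
        a j * (a ⬝ᵥ x) * (if (a ⬝ᵥ x) ^ 2 ≤ α then (1 : ℝ) else 0))
        = fun a => x j / (x ⬝ᵥ x) * ((a ⬝ᵥ x) * ((a ⬝ᵥ x) * (if (a ⬝ᵥ x) ^ 2 ≤ α then (1 : ℝ) else 0)))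
          + (w ⬝ᵥ a) * ((a ⬝ᵥ x) * (if (a ⬝ᵥ x) ^ 2 ≤ α then (1 : ℝ) else 0)) := by
      funext a
      rw [hwa a]
      ring
    -- vanishing of the orthogonal part
    have hzero : ∫ a, (w ⬝ᵥ a) * ((a ⬝ᵥ x) * (if (a ⬝ᵥ x) ^ 2 ≤ α then (1 : ℝ) else 0))
        ∂gaussianVec n = 0 := by
      by_cases hw0 : w = 0
      · simp [hw0]
      · have hW : w ⬝ᵥ w ≠ 0 := fun h => hw0 (dotProduct_self_eq_zero.mp h)
        have hre := integral_reflL w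
          (fun a => (w ⬝ᵥ a) * ((a ⬝ᵥ x) * (if (a ⬝ᵥ x) ^ 2 ≤ α then (1 : ℝ) else 0)))
        have hptw : ∀ a : Fin n → ℝ, w ⬝ᵥ reflL w a = -(w ⬝ᵥ a) := by
          intro a
          rw [dot_reflL w w a, dotProduct_comm a w]
          field_simp
          ring
        have hptx : ∀ a : Fin n → ℝ, reflL w a ⬝ᵥ x = a ⬝ᵥ x := fun a => by
          rw [reflL_dot, hwx]; ring
        have hneg : ∫ a, -((w ⬝ᵥ a) * ((a ⬝ᵥ x) * (if (a ⬝ᵥ x) ^ 2 ≤ α then (1 : ℝ) else 0)))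
            ∂gaussianVec n
            = ∫ a, (w ⬝ᵥ a) * ((a ⬝ᵥ x) * (if (a ⬝ᵥ x) ^ 2 ≤ α then (1 : ℝ) else 0))
              ∂gaussianVec n := by
          rw [← hre]
          refine integral_congr_ae (ae_of_all _ fun a => ?_)
          dsimp only
          rw [hptw a, hptx a]
          ring
        rw [integral_neg] at hneg
        linarith
    -- the radial part
    have hmain : ∫ a, (a ⬝ᵥ x) * ((a ⬝ᵥ x) * (if (a ⬝ᵥ x) ^ 2 ≤ α then (1 : ℝ) else 0))
        ∂gaussianVec n = (x ⬝ᵥ x) * betaK (vnorm x) α := by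
      have hswap : ∫ a, (a ⬝ᵥ x) * ((a ⬝ᵥ x) * (if (a ⬝ᵥ x) ^ 2 ≤ α then (1 : ℝ) else 0))
          ∂gaussianVec n
          = ∫ a, (vnorm x * a j) * ((vnorm x * a j)
              * (if (vnorm x * a j) ^ 2 ≤ α then (1 : ℝ) else 0)) ∂gaussianVec n := by
        by_cases hu0 : x - vnorm x • (Pi.single j 1 : Fin n → ℝ) = 0
        · have hxe : x = vnorm x • (Pi.single j 1 : Fin n → ℝ) := by rwa [sub_eq_zero] at hu0
          have hxa : ∀ a : Fin n → ℝ, a ⬝ᵥ x = vnorm x * a j := by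
            intro a
            conv_lhs => rw [hxe]
            rw [dotProduct_smul, dotProduct_single, smul_eq_mul]
            ring
          refine integral_congr_ae (ae_of_all _ fun a => ?_)
          dsimp only
          rw [hxa a]
        · set u : Fin n → ℝ := x - vnorm x • (Pi.single j 1 : Fin n → ℝ) with hudef
          have hU : u ⬝ᵥ u ≠ 0 := fun h => hu0 (dotProduct_self_eq_zero.mp h)
          have h1 : u ⬝ᵥ x = x ⬝ᵥ x - vnorm x * x j := by
            rw [hudef, sub_dotProduct, smul_dotProduct, single_dotProduct, smul_eq_mul]
            ring
          have h2 : u ⬝ᵥ u = 2 * (x ⬝ᵥ x - vnorm x * x j) := by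
            rw [hudef]
            simp only [sub_dotProduct, dotProduct_sub, smul_dotProduct, dotProduct_smul,
              single_dotProduct, dotProduct_single, smul_eq_mul, Pi.single_eq_same,
              Pi.sub_apply, Pi.smul_apply]
            linear_combination hr2
          have hkey : ∀ a : Fin n → ℝ, reflL u a ⬝ᵥ x = vnorm x * a j := by
            intro a
            have h3 : a ⬝ᵥ u = a ⬝ᵥ x - vnorm x * a j := by
              rw [hudef, dotProduct_sub, dotProduct_smul, dotProduct_single, smul_eq_mul]
              ring
            have h4 : x ⬝ᵥ x - vnorm x * x j ≠ 0 := fun h => hU (by rw [h2, h]; ring)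
            rw [reflL_dot, h1, h2, h3]
            field_simp
            ring
          have hre := integral_reflL u
            (fun a => (a ⬝ᵥ x) * ((a ⬝ᵥ x) * (if (a ⬝ᵥ x) ^ 2 ≤ α then (1 : ℝ) else 0)))
          rw [← hre]
          refine integral_congr_ae (ae_of_all _ fun a => ?_)
          dsimp only
          rw [hkey a]
      rw [hswap]
      have heval : ∫ a, (vnorm x * a j) * ((vnorm x * a j)
            * (if (vnorm x * a j) ^ 2 ≤ α then (1 : ℝ) else 0)) ∂gaussianVec n
          = ∫ z, (vnorm x * z) * ((vnorm x * z)
              * (if (vnorm x * z) ^ 2 ≤ α then (1 : ℝ) else 0)) ∂stdGaussian := by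
        unfold gaussianVec
        refine integral_eval_pi (fun _ : Fin n => stdGaussian) j
          (fun z => (vnorm x * z) * ((vnorm x * z)
            * (if (vnorm x * z) ^ 2 ≤ α then (1 : ℝ) else 0))) ?_
        have hm : Measurable fun z : ℝ => vnorm x * z := measurable_id.const_mul (vnorm x)
        exact hm.mul (hm.mul (Measurable.ite
          (measurableSet_le (hm.pow_const 2) measurable_const) measurable_const measurable_const))
      rw [heval]
      unfold betaK
      rw [← integral_const_mul]
      refine integral_congr_ae (ae_of_all _ fun z => ?_)
      dsimp only
      rw [mul_pow, ← hr2]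
      ring
    rw [hdecomp, integral_add (hint1.const_mul _) hint2, integral_const_mul, hzero, hmain, add_zero]
    field_simp

end Lem36

end

/-- **Lemma 3.6, part 1** (expectation of the truncated initialization matrix,
fixed threshold `α`). -/
theorem lemma36_part1 (n q m : ℕ) (hm : 1 ≤ m) (xstar : Fin q → Fin n → ℝ)
    (α : ℝ) (hα : 0 ≤ α) :
    (Matrix.of fun (j : Fin n) (k : Fin q) =>
        ∫ ω, initMat xstar α ω j k ∂(gaussianMatrices q m n)) =
      (Matrix.of fun (i : Fin n) (k : Fin q) => xstar k i) *
        Matrix.diagonal (fun k => betaK (vnorm (xstar k)) α) := by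
  have hm0 : (m : ℝ) ≠ 0 := Nat.cast_ne_zero.mpr (by omega)
  ext j k
  rw [Matrix.mul_diagonal]
  simp only [Matrix.of_apply]
  unfold initMat
  simp only [Matrix.of_apply]
  have hmeas2 : Measurable fun a : Fin n → ℝ =>
      a j * (a ⬝ᵥ xstar k) * (if (a ⬝ᵥ xstar k) ^ 2 ≤ α then (1 : ℝ) else 0) :=
    ((measurable_pi_apply j).mul (Lem36.measurable_dotr (xstar k))).mul
      (Lem36.measurable_inddot (xstar k) α)
  have hmeas1 : ∀ i : Fin m, Measurable fun η : Fin m → Fin n → ℝ =>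
      η i j * (η i ⬝ᵥ xstar k) * (if (η i ⬝ᵥ xstar k) ^ 2 ≤ α then (1 : ℝ) else 0) :=
    fun i => hmeas2.comp (measurable_pi_apply i)
  have hsingle : ∀ i : Fin m,
      ∫ ω, ω k i j * (ω k i ⬝ᵥ xstar k) * (if (ω k i ⬝ᵥ xstar k) ^ 2 ≤ α then (1 : ℝ) else 0)
        ∂gaussianMatrices q m n = xstar k j * betaK (vnorm (xstar k)) α := by
    intro i
    unfold gaussianMatrices
    have step1 := Lem36.integral_eval_pi
      (fun _ : Fin q => Measure.pi fun _ : Fin m => gaussianVec n) k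
      (fun η => η i j * (η i ⬝ᵥ xstar k) * (if (η i ⬝ᵥ xstar k) ^ 2 ≤ α then (1 : ℝ) else 0))
      (hmeas1 i)
    have step2 := Lem36.integral_eval_pi (fun _ : Fin m => gaussianVec n) i
      (fun a => a j * (a ⬝ᵥ xstar k) * (if (a ⬝ᵥ xstar k) ^ 2 ≤ α then (1 : ℝ) else 0))
      hmeas2
    rw [step1, step2, Lem36.key (xstar k) j α hα]
  have hintsum : ∀ i : Fin m, Integrable
      (fun ω : Fin q → Fin m → Fin n → ℝ =>
        ω k i j * (ω k i ⬝ᵥ xstar k) * (if (ω k i ⬝ᵥ xstar k) ^ 2 ≤ α then (1 : ℝ) else 0))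
      (gaussianMatrices q m n) := by
    intro i
    unfold gaussianMatrices
    exact Lem36.integrable_eval_pi (fun _ : Fin q => Measure.pi fun _ : Fin m => gaussianVec n) k
      (hmeas1 i)
      (Lem36.integrable_eval_pi (fun _ : Fin m => gaussianVec n) i hmeas2
        (Lem36.key_int (xstar k) j α hα))
  rw [integral_const_mul, integral_finset_sum _ (fun i _ => hintsum i),
    Finset.sum_congr rfl (fun i _ => hsingle i), Finset.sum_const, Finset.card_univ,
    Fintype.card_fin, nsmul_eq_mul]
  field_simp
end

section
/- Proposition 4.5 (epsilon-net extension for two-sided bounds on a random quadratic form). Let n, r, q, m ≥ 1, let 0 < b₁ ≤ b₂, and let p₀ ∈ [0,1]. Let M_ki (k ∈ [q], i ∈ [m]) be random n×r real matrices on a common probability space such that for every fixed n×r real matrix W with ‖W‖_F = 1, the probability that Σ_{k,i}⟨M_ki, W⟩² lies outside the interval [b₁, b₂] is at most p₀. Then with probability at least 1 − (33·b₂/b₁)^{nr}·p₀, the following holds simultaneously for all n×r real matrices W with ‖W‖_F = 1: 0.8·b₁ ≤ Σ_{k,i}⟨M_ki, W⟩² ≤ 1.4·b₂. -/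
open MeasureTheory ProbabilityTheory Matrix
open scoped ENNReal

section Aux
open MeasureTheory Metric Finset
open scoped ENNReal

lemma card_sep_le {ι : Type*} [Fintype ι] [Nonempty ι] (ε : ℝ) (hε : 0 < ε)
    (s : Finset (EuclideanSpace ℝ ι)) (h1 : ∀ x ∈ s, ‖x‖ = 1)
    (hsep : ∀ x ∈ s, ∀ y ∈ s, x ≠ y → ε ≤ ‖x - y‖) :
    (s.card : ℝ) ≤ (1 + 2 / ε) ^ (Fintype.card ι) := by
  have hd : 1 ≤ Fintype.card ι := Fintype.card_pos
  set d := Fintype.card ι with hdd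
  set V := volume (ball (0 : EuclideanSpace ℝ ι) 1) with hV
  have hV0 : V ≠ 0 := (measure_ball_pos volume 0 one_pos).ne'
  have hVt : V ≠ ⊤ := measure_ball_lt_top.ne
  have hball : ∀ (x : EuclideanSpace ℝ ι) (r : ℝ), 0 ≤ r →
      volume (ball x r) = ENNReal.ofReal (r ^ d) * V := by
    intro x r hr
    rw [Measure.addHaar_ball volume x hr, hV, hdd, finrank_euclideanSpace]
  have hdisj : (↑s : Set (EuclideanSpace ℝ ι)).PairwiseDisjoint (fun x => ball x (ε / 2)) := by
    intro x hx y hy hxy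
    apply ball_disjoint_ball
    have := hsep x hx y hy hxy
    rw [dist_eq_norm]
    linarith
  have hsum : volume (⋃ x ∈ s, ball x (ε / 2)) = ∑ x ∈ s, volume (ball x (ε / 2)) :=
    measure_biUnion_finset hdisj (fun x _ => measurableSet_ball)
  have hsub : (⋃ x ∈ s, ball x (ε / 2)) ⊆ ball (0 : EuclideanSpace ℝ ι) (1 + ε / 2) := by
    intro y hy
    simp only [Set.mem_iUnion] at hy
    obtain ⟨x, hx, hyx⟩ := hy
    rw [mem_ball] at hyx ⊢
    calc dist y 0 ≤ dist y x + dist x 0 := dist_triangle _ _ _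
    _ < ε / 2 + 1 := by
        apply add_lt_add_of_lt_of_le hyx
        rw [dist_zero_right, h1 x hx]
    _ = 1 + ε / 2 := by ring
  have key : (s.card : ℝ≥0∞) * ENNReal.ofReal ((ε / 2) ^ d) * V ≤
      ENNReal.ofReal ((1 + ε / 2) ^ d) * V := by
    calc (s.card : ℝ≥0∞) * ENNReal.ofReal ((ε / 2) ^ d) * V
        = ∑ x ∈ s, volume (ball x (ε / 2)) := by
          rw [Finset.sum_congr rfl (fun x _ => hball x (ε / 2) (by linarith))]
          simp [Finset.sum_const, nsmul_eq_mul, mul_assoc]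
      _ = volume (⋃ x ∈ s, ball x (ε / 2)) := hsum.symm
      _ ≤ volume (ball (0 : EuclideanSpace ℝ ι) (1 + ε / 2)) := measure_mono hsub
      _ = ENNReal.ofReal ((1 + ε / 2) ^ d) * V := hball _ _ (by linarith)
  have key2 : (s.card : ℝ≥0∞) * ENNReal.ofReal ((ε / 2) ^ d) ≤ ENNReal.ofReal ((1 + ε / 2) ^ d) :=
    (ENNReal.mul_le_mul_iff_left hV0 hVt).mp key
  have hpow : (0:ℝ) < (ε / 2) ^ d := by positivity
  have key3 : (s.card : ℝ) * (ε / 2) ^ d ≤ (1 + ε / 2) ^ d := by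
    rw [← ENNReal.ofReal_natCast, ← ENNReal.ofReal_mul (by positivity)] at key2
    exact (ENNReal.ofReal_le_ofReal_iff (by positivity)).mp key2
  have heq : (1 + 2 / ε) ^ d * (ε / 2) ^ d = (1 + ε / 2) ^ d := by
    rw [← mul_pow]
    congr 1
    field_simp
    ring
  nlinarith []

lemma exists_net {ι : Type*} [Fintype ι] [Nonempty ι] (ε : ℝ) (hε : 0 < ε) :
    ∃ s : Finset (EuclideanSpace ℝ ι), (∀ x ∈ s, ‖x‖ = 1) ∧
      (s.card : ℝ) ≤ (1 + 2 / ε) ^ (Fintype.card ι) ∧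
      ∀ x : EuclideanSpace ℝ ι, ‖x‖ = 1 → ∃ y ∈ s, ‖x - y‖ ≤ ε := by
  classical
  set B := Nat.floor ((1 + 2 / ε) ^ (Fintype.card ι)) with hB
  set Pr : ℕ → Prop := fun k => ∃ s : Finset (EuclideanSpace ℝ ι),
    (∀ x ∈ s, ‖x‖ = 1) ∧ (∀ x ∈ s, ∀ y ∈ s, x ≠ y → ε ≤ ‖x - y‖) ∧ s.card = k with hPr
  have hbound : ∀ k, Pr k → k ≤ B := by
    rintro k ⟨s, h1, h2, h3⟩
    rw [← h3]
    exact Nat.le_floor (card_sep_le ε hε s h1 h2)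
  have hP0 : Pr 0 := ⟨∅, by simp, by simp, rfl⟩
  set K := Nat.findGreatest Pr B with hK
  have hPK : Pr K := Nat.findGreatest_spec (Nat.zero_le B) hP0
  obtain ⟨s, h1, h2, h3⟩ := hPK
  refine ⟨s, h1, ?_, ?_⟩
  · exact card_sep_le ε hε s h1 h2
  · intro x hx
    by_contra hc
    push_neg at hc
    have hxs : x ∉ s := fun hxs => by
      have := hc x hxs
      simp at this
      linarith
    have hP1 : Pr (K + 1) := by
      refine ⟨insert x s, ?_, ?_, ?_⟩
      · intro z hz
        rcases Finset.mem_insert.mp hz with h | h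
        · rw [h]; exact hx
        · exact h1 z h
      · intro z hz w hw hzw
        rcases Finset.mem_insert.mp hz with h | h <;>
          rcases Finset.mem_insert.mp hw with h' | h'
        · exact absurd (h.trans h'.symm) hzw
        · rw [h]; exact (hc w h').le
        · rw [h', ← norm_neg]; simp only [neg_sub]; exact (hc z h).le
        · exact h2 z h w h' hzw
      · rw [Finset.card_insert_of_notMem hxs, h3]
    have hle : K + 1 ≤ B := hbound _ hP1
    exact Nat.findGreatest_is_greatest (Nat.lt_succ_self K) hle hP1

set_option maxHeartbeats 1000000 in
lemma net_extend {ι κ : Type*} [Fintype ι] [Fintype κ] [Nonempty ι]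
    (b₁ b₂ : ℝ) (hb1 : 0 < b₁) (hb12 : b₁ ≤ b₂)
    (T : EuclideanSpace ℝ ι →L[ℝ] EuclideanSpace ℝ κ)
    (s : Finset (EuclideanSpace ℝ ι))
    (hnet : ∀ x : EuclideanSpace ℝ ι, ‖x‖ = 1 → ∃ y ∈ s, ‖x - y‖ ≤ 0.09 * Real.sqrt (b₁ / b₂))
    (hb : ∀ y ∈ s, b₁ ≤ ‖T y‖ ^ 2 ∧ ‖T y‖ ^ 2 ≤ b₂) :
    ∀ x : EuclideanSpace ℝ ι, ‖x‖ = 1 → 0.8 * b₁ ≤ ‖T x‖ ^ 2 ∧ ‖T x‖ ^ 2 ≤ 1.4 * b₂ := by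
  have hb2 : 0 < b₂ := lt_of_lt_of_le hb1 hb12
  set ε := 0.09 * Real.sqrt (b₁ / b₂) with hε
  set α := Real.sqrt b₁ with hα
  set β := Real.sqrt b₂ with hβ
  have hα0 : 0 < α := Real.sqrt_pos.mpr hb1
  have hβ0 : 0 < β := Real.sqrt_pos.mpr hb2
  have hα2 : α ^ 2 = b₁ := Real.sq_sqrt hb1.le
  have hβ2 : β ^ 2 = b₂ := Real.sq_sqrt hb2.le
  have hsqdiv : Real.sqrt (b₁ / b₂) * β = α := by
    rw [hβ, hα, ← Real.sqrt_mul (by positivity), div_mul_cancel₀ _ hb2.ne']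
  have hεβ : ε * β = 0.09 * α := by rw [hε]; rw [mul_assoc, hsqdiv]
  have hε0 : 0 < ε := by positivity
  have hεle : ε ≤ 0.09 := by
    rw [hε]
    have h1 : Real.sqrt (b₁ / b₂) ≤ 1 := Real.sqrt_le_one.mpr (by
      rw [div_le_one hb2]; exact hb12)
    nlinarith [Real.sqrt_nonneg (b₁ / b₂)]
  -- sup of ‖T x‖ over the sphere is attained
  have hsphne : (Metric.sphere (0 : EuclideanSpace ℝ ι) 1).Nonempty :=
    NormedSpace.sphere_nonempty.mpr zero_le_one
  have hcomp : IsCompact (Metric.sphere (0 : EuclideanSpace ℝ ι) 1) := isCompact_sphere _ _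
  have hcont : Continuous fun x : EuclideanSpace ℝ ι => ‖T x‖ := T.continuous.norm
  obtain ⟨x₀, hx₀, hmax⟩ := hcomp.exists_isMaxOn hsphne hcont.continuousOn
  set S := ‖T x₀‖ with hS
  have hx₀1 : ‖x₀‖ = 1 := by simpa using hx₀
  have hSmax : ∀ x : EuclideanSpace ℝ ι, ‖x‖ = 1 → ‖T x‖ ≤ S := by
    intro x hx
    exact hmax (by simpa using hx)
  have hS0 : 0 ≤ S := norm_nonneg _
  have hTle : ∀ v : EuclideanSpace ℝ ι, ‖T v‖ ≤ ‖v‖ * S := by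
    intro v
    rcases eq_or_ne v 0 with rfl | hv
    · simp
    · have hnv : 0 < ‖v‖ := norm_pos_iff.mpr hv
      have hu : ‖(‖v‖⁻¹ • v : EuclideanSpace ℝ ι)‖ = 1 := by
        rw [norm_smul, norm_inv, norm_norm, inv_mul_cancel₀ hnv.ne']
      have := hSmax _ hu
      rw [T.map_smul, norm_smul, norm_inv, norm_norm] at this
      calc ‖T v‖ = ‖v‖ * (‖v‖⁻¹ * ‖T v‖) := by field_simp
        _ ≤ ‖v‖ * S := by
            apply mul_le_mul_of_nonneg_left _ hnv.le
            simpa [mul_comm] using this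
  -- bound S ≤ β / (1 - ε)
  have hTyβ : ∀ y ∈ s, ‖T y‖ ≤ β := by
    intro y hy
    nlinarith [(hb y hy).2, norm_nonneg (T y)]
  have hTyα : ∀ y ∈ s, α ≤ ‖T y‖ := by
    intro y hy
    nlinarith [(hb y hy).1, norm_nonneg (T y)]
  obtain ⟨y₀, hy₀s, hy₀⟩ := hnet x₀ hx₀1
  have hSband : S ≤ β + ε * S := by
    calc S = ‖T (y₀ + (x₀ - y₀))‖ := by rw [show y₀ + (x₀ - y₀) = x₀ by module]
    _ = ‖T y₀ + T (x₀ - y₀)‖ := by rw [map_add]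
    _ ≤ ‖T y₀‖ + ‖T (x₀ - y₀)‖ := norm_add_le _ _
    _ ≤ β + ε * S := by
        apply add_le_add (hTyβ y₀ hy₀s)
        calc ‖T (x₀ - y₀)‖ ≤ ‖x₀ - y₀‖ * S := hTle _
        _ ≤ ε * S := mul_le_mul_of_nonneg_right hy₀ hS0
  have hSle : S ≤ β / 0.91 := by
    have h1 : S * (1 - ε) ≤ β := by nlinarith
    have h2 : (0.91 : ℝ) ≤ 1 - ε := by linarith
    rw [le_div_iff₀ (by norm_num)]
    nlinarith
  intro x hx
  obtain ⟨y, hys, hy⟩ := hnet x hx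
  have hup : ‖T x‖ ≤ β / 0.91 := (hSmax x hx).trans hSle
  have hεS : ε * S ≤ (0.09 / 0.91) * α := by
    calc ε * S ≤ ε * (β / 0.91) := mul_le_mul_of_nonneg_left hSle hε0.le
    _ = (ε * β) / 0.91 := by ring
    _ = (0.09 / 0.91) * α := by rw [hεβ]; ring
  have hlow : (0.82 / 0.91) * α ≤ ‖T x‖ := by
    have h1 : ‖T y‖ ≤ ‖T x‖ + ‖T (y - x)‖ := by
      calc ‖T y‖ = ‖T (x + (y - x))‖ := by rw [show x + (y - x) = y by module]
      _ = ‖T x + T (y - x)‖ := by rw [map_add]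
      _ ≤ ‖T x‖ + ‖T (y - x)‖ := norm_add_le _ _
    have h2 : ‖T (y - x)‖ ≤ ε * S := by
      calc ‖T (y - x)‖ ≤ ‖y - x‖ * S := hTle _
      _ ≤ ε * S := by
          apply mul_le_mul_of_nonneg_right _ hS0
          rw [← norm_neg]; simpa [neg_sub] using hy
    have h3 := hTyα y hys
    have : α - (0.09 / 0.91) * α ≤ ‖T x‖ := by linarith
    linarith
  have ht0 : (0:ℝ) ≤ ‖T x‖ := norm_nonneg _
  set t := ‖T x‖ with htdef
  have hsqlow : (0.82 / 0.91 * α) ^ 2 ≤ t ^ 2 := by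
    apply pow_le_pow_left₀ (by positivity) hlow
  have hsqhi : t ^ 2 ≤ (β / 0.91) ^ 2 := by
    apply pow_le_pow_left₀ ht0 hup
  have e1 : (0.82 / 0.91 * α) ^ 2 = (0.82 / 0.91)^2 * b₁ := by rw [mul_pow, hα2]
  have e2 : (β / 0.91) ^ 2 = b₂ / 0.91 ^ 2 := by rw [div_pow, hβ2]
  rw [e1] at hsqlow
  rw [e2] at hsqhi
  have hc1 : (0.8:ℝ) * b₁ ≤ (0.82 / 0.91)^2 * b₁ := by
    apply mul_le_mul_of_nonneg_right _ hb1.le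
    norm_num
  have hc2 : b₂ / 0.91 ^ 2 ≤ 1.4 * b₂ := by
    rw [div_le_iff₀ (by norm_num)]
    nlinarith [hb2.le]
  exact ⟨hc1.trans hsqlow, hsqhi.trans hc2⟩

noncomputable def Tlin {q m n r : ℕ} (c : Fin q → Fin m → Fin n → Fin r → ℝ) :
    EuclideanSpace ℝ (Fin n × Fin r) →L[ℝ] EuclideanSpace ℝ (Fin q × Fin m) :=
  LinearMap.toContinuousLinearMap
  { toFun := fun x => WithLp.toLp 2 (fun p : Fin q × Fin m => ∑ a, ∑ b, c p.1 p.2 a b * x (a, b))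
    map_add' := by
      intro x y
      ext p
      simp only [PiLp.toLp_apply, PiLp.add_apply, mul_add, Finset.sum_add_distrib]
    map_smul' := by
      intro t x
      ext p
      simp only [PiLp.toLp_apply, PiLp.smul_apply, smul_eq_mul, RingHom.id_apply, Finset.mul_sum]
      congr 1; funext a; congr 1; funext b; ring }

lemma Tlin_sq {q m n r : ℕ} (c : Fin q → Fin m → Fin n → Fin r → ℝ)
    (x : EuclideanSpace ℝ (Fin n × Fin r)) :
    ‖Tlin c x‖ ^ 2 = ∑ k, ∑ i, (∑ a, ∑ b, c k i a b * x (a, b)) ^ 2 := by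
  rw [EuclideanSpace.norm_eq, Real.sq_sqrt (by positivity)]
  rw [Fintype.sum_prod_type]
  apply Finset.sum_congr rfl; intro k _
  apply Finset.sum_congr rfl; intro i _
  rw [Real.norm_eq_abs, sq_abs]
  rfl

end Aux

/-- **Proposition 4.5** (epsilon-net extension for two-sided bounds on a random
quadratic form). -/
theorem prop45 (n r q m : ℕ) (hn : 1 ≤ n) (hr : 1 ≤ r) (hq : 1 ≤ q) (hm : 1 ≤ m)
    (b₁ b₂ p₀ : ℝ) (hb1 : 0 < b₁) (hb12 : b₁ ≤ b₂) (hp0 : 0 ≤ p₀) (hp1 : p₀ ≤ 1)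
    (Ω : Type) [MeasurableSpace Ω] (P : Measure Ω) [IsProbabilityMeasure P]
    (M : Ω → Fin q → Fin m → Fin n → Fin r → ℝ) (hM : Measurable M)
    (h : ∀ W : Matrix (Fin n) (Fin r) ℝ, frob W = 1 →
      P {ω | ¬ (b₁ ≤ ∑ k, ∑ i, (∑ a, ∑ b, M ω k i a b * W a b) ^ 2 ∧
               ∑ k, ∑ i, (∑ a, ∑ b, M ω k i a b * W a b) ^ 2 ≤ b₂)} ≤ ENNReal.ofReal p₀) :
    ENNReal.ofReal (1 - (33 * b₂ / b₁) ^ (n * r) * p₀) ≤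
      P {ω | ∀ W : Matrix (Fin n) (Fin r) ℝ, frob W = 1 →
        0.8 * b₁ ≤ ∑ k, ∑ i, (∑ a, ∑ b, M ω k i a b * W a b) ^ 2 ∧
        ∑ k, ∑ i, (∑ a, ∑ b, M ω k i a b * W a b) ^ 2 ≤ 1.4 * b₂} := by
  classical
  have hb2 : 0 < b₂ := lt_of_lt_of_le hb1 hb12
  haveI : Nonempty (Fin n × Fin r) :=
    ⟨(⟨0, Nat.lt_of_lt_of_le Nat.zero_lt_one hn⟩, ⟨0, Nat.lt_of_lt_of_le Nat.zero_lt_one hr⟩)⟩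
  set ε := 0.09 * Real.sqrt (b₁ / b₂) with hεdef
  have hε0 : 0 < ε := by
    have h1 : 0 < b₁ / b₂ := by positivity
    have h2 : 0 < Real.sqrt (b₁ / b₂) := Real.sqrt_pos.mpr h1
    rw [hεdef]; positivity
  obtain ⟨s, hs1, hscard, hsnet⟩ := exists_net (ι := Fin n × Fin r) ε hε0
  set C : ℝ := (33 * b₂ / b₁) ^ (n * r) with hCdef
  have hC0 : 0 ≤ C := by positivity
  -- cardinality bound
  have hcard : (s.card : ℝ) ≤ C := by
    refine hscard.trans ?_
    rw [Fintype.card_prod, Fintype.card_fin, Fintype.card_fin]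
    apply pow_le_pow_left₀ (by positivity)
    set t := Real.sqrt (b₂ / b₁) with htdef
    have ht1 : 1 ≤ t := by
      rw [htdef, show (1:ℝ) = Real.sqrt 1 by rw [Real.sqrt_one]]
      exact Real.sqrt_le_sqrt ((one_le_div hb1).mpr hb12)
    have ht0 : 0 < t := lt_of_lt_of_le one_pos ht1
    have ht2 : t ^ 2 = b₂ / b₁ := Real.sq_sqrt (by positivity)
    have hinv : Real.sqrt (b₁ / b₂) = t⁻¹ := by
      rw [htdef, ← Real.sqrt_inv]
      congr 1
      field_simp
    have hεt : ε = 0.09 * t⁻¹ := by rw [hεdef, hinv]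
    have h2ε : 2 / ε = (200 / 9) * t := by
      rw [hεt]
      field_simp
      ring
    have hrhs : 33 * b₂ / b₁ = 33 * t ^ 2 := by rw [ht2]; ring
    rw [h2ε, hrhs]
    nlinarith
  -- measurability
  have hQmeas : ∀ W : Matrix (Fin n) (Fin r) ℝ,
      Measurable fun ω => ∑ k, ∑ i, (∑ a, ∑ b, M ω k i a b * W a b) ^ 2 := by
    intro W
    apply Finset.measurable_sum; intro k _
    apply Finset.measurable_sum; intro i _
    apply Measurable.pow_const
    apply Finset.measurable_sum; intro a _
    apply Finset.measurable_sum; intro b _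
    exact (((hM.eval (a := k)).eval (a := i)).eval (a := a)).eval (a := b) |>.mul_const _
  have hbadmeas : ∀ W : Matrix (Fin n) (Fin r) ℝ,
      MeasurableSet {ω | ¬ (b₁ ≤ ∑ k, ∑ i, (∑ a, ∑ b, M ω k i a b * W a b) ^ 2 ∧
        ∑ k, ∑ i, (∑ a, ∑ b, M ω k i a b * W a b) ^ 2 ≤ b₂)} := by
    intro W
    have : {ω | ¬ (b₁ ≤ ∑ k, ∑ i, (∑ a, ∑ b, M ω k i a b * W a b) ^ 2 ∧
        ∑ k, ∑ i, (∑ a, ∑ b, M ω k i a b * W a b) ^ 2 ≤ b₂)} =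
        ({ω | b₁ ≤ ∑ k, ∑ i, (∑ a, ∑ b, M ω k i a b * W a b) ^ 2} ∩
         {ω | ∑ k, ∑ i, (∑ a, ∑ b, M ω k i a b * W a b) ^ 2 ≤ b₂})ᶜ := rfl
    rw [this]
    exact ((measurableSet_le measurable_const (hQmeas W)).inter
      (measurableSet_le (hQmeas W) measurable_const)).compl
  -- frobenius norm correspondence
  have hfrob : ∀ y : EuclideanSpace ℝ (Fin n × Fin r),
      frob (Matrix.of fun a b => y (a, b)) = ‖y‖ := by
    intro y
    rw [frob, EuclideanSpace.norm_eq, Fintype.sum_prod_type]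
    congr 1
    apply Finset.sum_congr rfl; intro a _
    apply Finset.sum_congr rfl; intro b _
    rw [Real.norm_eq_abs, sq_abs]
    rfl
  -- the bad event
  set Bad : Set Ω := ⋃ y ∈ s, {ω | ¬ (b₁ ≤ ∑ k, ∑ i,
      (∑ a, ∑ b, M ω k i a b * (Matrix.of fun a b => y (a, b)) a b) ^ 2 ∧
      ∑ k, ∑ i, (∑ a, ∑ b, M ω k i a b * (Matrix.of fun a b => y (a, b)) a b) ^ 2 ≤ b₂)}
    with hBadDef
  have hBadMeas : MeasurableSet Bad :=
    s.measurableSet_biUnion fun y _ => hbadmeas _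
  have hPBad : P Bad ≤ ENNReal.ofReal (C * p₀) := by
    calc P Bad ≤ ∑ y ∈ s, P {ω | ¬ (b₁ ≤ ∑ k, ∑ i,
          (∑ a, ∑ b, M ω k i a b * (Matrix.of fun a b => y (a, b)) a b) ^ 2 ∧
          ∑ k, ∑ i, (∑ a, ∑ b, M ω k i a b * (Matrix.of fun a b => y (a, b)) a b) ^ 2 ≤ b₂)} :=
        measure_biUnion_finset_le s _
    _ ≤ ∑ _y ∈ s, ENNReal.ofReal p₀ := by
        apply Finset.sum_le_sum
        intro y hy
        exact h (Matrix.of fun a b => y (a, b)) (by rw [hfrob y, hs1 y hy])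
    _ = (s.card : ℝ≥0∞) * ENNReal.ofReal p₀ := by
        rw [Finset.sum_const, nsmul_eq_mul]
    _ ≤ ENNReal.ofReal C * ENNReal.ofReal p₀ := by
        apply mul_le_mul_left
        rw [← ENNReal.ofReal_natCast]
        exact ENNReal.ofReal_le_ofReal hcard
    _ = ENNReal.ofReal (C * p₀) := (ENNReal.ofReal_mul hC0).symm
  -- complement of the bad event is contained in the good event
  have hsubset : Badᶜ ⊆ {ω | ∀ W : Matrix (Fin n) (Fin r) ℝ, frob W = 1 →
      0.8 * b₁ ≤ ∑ k, ∑ i, (∑ a, ∑ b, M ω k i a b * W a b) ^ 2 ∧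
      ∑ k, ∑ i, (∑ a, ∑ b, M ω k i a b * W a b) ^ 2 ≤ 1.4 * b₂} := by
    intro ω hω
    intro W hW
    set x : EuclideanSpace ℝ (Fin n × Fin r) := WithLp.toLp 2 (fun p : Fin n × Fin r => W p.1 p.2) with hxdef
    have hWx : (Matrix.of fun a b => x (a, b)) = W := rfl
    have hx1 : ‖x‖ = 1 := by rw [← hfrob x, hWx, hW]
    have hb' : ∀ y ∈ s, b₁ ≤ ‖Tlin (M ω) y‖ ^ 2 ∧ ‖Tlin (M ω) y‖ ^ 2 ≤ b₂ := by
      intro y hy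
      have hgood : b₁ ≤ ∑ k, ∑ i,
          (∑ a, ∑ b, M ω k i a b * (Matrix.of fun a b => y (a, b)) a b) ^ 2 ∧
          ∑ k, ∑ i, (∑ a, ∑ b, M ω k i a b * (Matrix.of fun a b => y (a, b)) a b) ^ 2 ≤ b₂ := by
        by_contra hc
        exact hω (Set.mem_biUnion hy hc)
      rw [Tlin_sq]
      exact hgood
    have hres := net_extend b₁ b₂ hb1 hb12 (Tlin (M ω)) s hsnet hb' x hx1
    rw [Tlin_sq] at hres
    exact hres
  -- conclusion
  calc ENNReal.ofReal (1 - C * p₀)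
      = 1 - ENNReal.ofReal (C * p₀) := by
        rw [ENNReal.ofReal_sub _ (mul_nonneg hC0 hp0), ENNReal.ofReal_one]
    _ ≤ 1 - P Bad := tsub_le_tsub_left hPBad 1
    _ = P Badᶜ := (prob_compl_eq_one_sub hBadMeas).symm
    _ ≤ _ := measure_mono hsubset
end
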